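/- The subgroup Ĥ = ⟨a⟩₂ * ⟨b⟩₂ of the group Ĝ = ⟨a, b, c | a², b², c², [a, b^c]⟩ is not verbally closed: the equation (x³[x,y^z]y³)²[x,y^z]³ = (ab)² has the solution x = a, y = b, z = c in Ĝ but no solution in Ĥ. -/

import Mathlib

open scoped commutatorElement

/-- Relations of the group `Ĝ = ⟨a, b, c ∣ a², b², c², [a, b^c]⟩`. -/
def rels7 : Set (FreeGroup (Fin 3)) :=
  {(FreeGroup.of 0) ^ 2, (FreeGroup.of 1) ^ 2, (FreeGroup.of 2) ^ 2,
    ⁅(FreeGroup.of 0 : FreeGroup (Fin 3)), FreeGroup.of 2 * FreeGroup.of 1 * (FreeGroup.of 2)⁻¹⁆}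

/-- The group `Ĝ = ⟨a, b, c ∣ a², b², c², [a, b^c]⟩`. -/
abbrev Ghat7 : Type := PresentedGroup rels7

def a7 : Ghat7 := PresentedGroup.of 0
def b7 : Ghat7 := PresentedGroup.of 1
def c7 : Ghat7 := PresentedGroup.of 2

/-- The subgroup `Ĥ = ⟨a⟩₂ * ⟨b⟩₂` of `Ĝ`. -/
def Hhat7 : Subgroup Ghat7 := Subgroup.closure {a7, b7}

/-- The left-hand side `(x³[x,y^z]y³)²[x,y^z]³` of equation (2). -/
def lhs7 (x y z : Ghat7) : Ghat7 :=
  (x ^ 3 * (x * (z * y * z⁻¹) * x⁻¹ * (z * y * z⁻¹)⁻¹) * y ^ 3) ^ 2 *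
    (x * (z * y * z⁻¹) * x⁻¹ * (z * y * z⁻¹)⁻¹) ^ 3

namespace HG7aux

open DihedralGroup Equiv

/-- The word shape of the equation, in any group. -/
def shp {G : Type*} [Group G] (x y z : G) : G :=
  (x ^ 3 * (x * (z * y * z⁻¹) * x⁻¹ * (z * y * z⁻¹)⁻¹) * y ^ 3) ^ 2 *
    (x * (z * y * z⁻¹) * x⁻¹ * (z * y * z⁻¹)⁻¹) ^ 3

lemma map_shp {G H : Type*} [Group G] [Group H] (f : G →* H) (x y z : G) :
    f (shp x y z) = shp (f x) (f y) (f z) := by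
  simp only [shp, map_mul, map_pow, map_inv]

lemma lhs7_eq_shp (x y z : Ghat7) : lhs7 x y z = shp x y z := rfl

/-! ### The key inequality in the dihedral group of order 24 -/

lemma inv_r (i : ZMod 12) : (r i : DihedralGroup 12)⁻¹ = r (-i) :=
  inv_eq_of_mul_eq_one_right (by rw [r_mul_r, add_neg_cancel]; rfl)

lemma inv_sr (i : ZMod 12) : (sr i : DihedralGroup 12)⁻¹ = sr i :=
  inv_eq_of_mul_eq_one_right (sr_mul_self i)

set_option maxHeartbeats 1000000 in
lemma key : ∀ x y z : DihedralGroup 12, shp x y z ≠ (sr 0 * sr 1) ^ 2 := by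
  rintro (i | i) (j | j) (k | k) <;>
    simp only [shp, pow_succ, pow_zero, one_mul, mul_assoc, r_mul_r, r_mul_sr, sr_mul_r,
      sr_mul_sr, inv_r, inv_sr] <;>
    revert i j k <;> decide

/-! ### A concrete permutation model -/

abbrev K : Type := Equiv.Perm (Fin 7)

def A : K := swap 1 3 * swap 5 6
def Bp : K := swap 0 1 * (swap 2 3 * swap 4 5)
def Cp : K := swap 1 2 * swap 4 6
def ρ : K := A * Bp

set_option maxRecDepth 2000 in
lemma hρ12 : ρ ^ 12 = 1 := by decide
lemma hρA : ρ * A = A * ρ⁻¹ := by decide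

lemma pow_mod (m : ℕ) : ρ ^ m = ρ ^ (m % 12) := by
  conv_lhs => rw [← Nat.div_add_mod m 12]
  rw [pow_add, pow_mul, hρ12, one_pow, one_mul]

def R (i : ZMod 12) : K := ρ ^ i.val

lemma Rzero : R 0 = 1 := by simp [R]

lemma Rmul (i j : ZMod 12) : R (i + j) = R i * R j := by
  unfold R
  rw [ZMod.val_add, ← pow_mod, pow_add]

lemma Rinv (i : ZMod 12) : R (-i) = (R i)⁻¹ := by
  rw [eq_inv_iff_mul_eq_one, ← Rmul, neg_add_cancel, Rzero]

lemma powA : ∀ k : ℕ, ρ ^ k * A = A * (ρ⁻¹) ^ k := by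
  intro k
  induction k with
  | zero => simp
  | succ n ih =>
    rw [pow_succ, mul_assoc, hρA, ← mul_assoc, ih, pow_succ, mul_assoc]

lemma RA (i : ZMod 12) : R i * A = A * R (-i) := by
  rw [Rinv, show R i = ρ ^ i.val from rfl, ← inv_pow]
  exact powA i.val

def ιf : DihedralGroup 12 → K
  | .r i => R i
  | .sr i => A * R i

def ι : DihedralGroup 12 →* K where
  toFun := ιf
  map_one' := by show R 0 = 1; exact Rzero
  map_mul' := by
    rintro (i | i) (j | j)
    · show R (i + j) = R i * R j
      exact Rmul i j
    · show A * R (j - i) = R i * (A * R j)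
      rw [← mul_assoc, RA, mul_assoc, ← Rmul, sub_eq_neg_add]
    · show A * R (i + j) = A * R i * R j
      rw [mul_assoc, Rmul]
    · show R (j - i) = A * R i * (A * R j)
      rw [mul_assoc, ← mul_assoc (R i), RA, ← mul_assoc, ← mul_assoc,
        show A * A = 1 by decide, one_mul, ← Rmul, sub_eq_neg_add]

lemma ι_r (i : ZMod 12) : ι (r i) = ρ ^ i.val := rfl
lemma ι_sr (i : ZMod 12) : ι (sr i) = A * ρ ^ i.val := rfl

lemma ι_inj : Function.Injective ι := by
  apply (injective_iff_map_eq_one ι).2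
  rintro (i | i) h
  · rw [ι_r] at h
    have h12 : ∀ k : Fin 12, ρ ^ (k : ℕ) = 1 → (k : ℕ) = 0 := by set_option maxRecDepth 10000 in decide
    have hv := h12 ⟨i.val, i.val_lt⟩ h
    have hi : i = 0 := by
      exact_mod_cast (ZMod.val_eq_zero i).mp hv
    rw [hi, ← DihedralGroup.one_def]
  · rw [ι_sr] at h
    have h12 : ∀ k : Fin 12, A * ρ ^ (k : ℕ) ≠ 1 := by set_option maxRecDepth 10000 in decide
    exact absurd h (h12 ⟨i.val, i.val_lt⟩)

lemma ι_sr0 : ι (sr 0) = A := by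
  rw [ι_sr, ZMod.val_zero, pow_zero, mul_one]

lemma ι_sr1 : ι (sr 1) = Bp := by
  rw [ι_sr, show (1 : ZMod 12).val = 1 from rfl, pow_one, ρ, ← mul_assoc, show A * A = 1 by decide, one_mul]

/-! ### The homomorphism from `Ĝ` -/

def f : Fin 3 → K := ![A, Bp, Cp]

lemma hrels : ∀ w ∈ rels7, FreeGroup.lift f w = 1 := by
  intro w hw
  simp only [rels7, Set.mem_insert_iff, Set.mem_singleton_iff] at hw
  rcases hw with rfl | rfl | rfl | rfl <;>
    simp only [commutatorElement_def, map_pow, map_mul, map_inv, FreeGroup.lift_apply_of] <;>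
    decide

def ψ : Ghat7 →* K := PresentedGroup.toGroup hrels

lemma ψa : ψ a7 = A := PresentedGroup.toGroup.of hrels
lemma ψb : ψ b7 = Bp := PresentedGroup.toGroup.of hrels

lemma mem_range {x : Ghat7} (hx : x ∈ Hhat7) : ∃ u : DihedralGroup 12, ι u = ψ x := by
  have h1 : ψ x ∈ Subgroup.map ψ Hhat7 := ⟨x, hx, rfl⟩
  rw [Hhat7, MonoidHom.map_closure, Set.image_pair, ψa, ψb] at h1
  have h3 : Subgroup.closure {A, Bp} ≤ ι.range := by
    rw [Subgroup.closure_le]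
    rintro g (rfl | rfl)
    · exact ⟨sr 0, ι_sr0⟩
    · exact ⟨sr 1, ι_sr1⟩
  exact h3 h1

/-! ### Relations in `Ĝ` -/

lemma rel_one {w : FreeGroup (Fin 3)} (h : w ∈ rels7) : PresentedGroup.mk rels7 w = 1 :=
  (QuotientGroup.eq_one_iff w).mpr (Subgroup.subset_normalClosure h)

lemma ha2 : a7 ^ 2 = 1 := by
  have := rel_one (w := (FreeGroup.of 0) ^ 2) (by simp [rels7])
  rwa [map_pow] at this

lemma hb2 : b7 ^ 2 = 1 := by
  have := rel_one (w := (FreeGroup.of 1) ^ 2) (by simp [rels7])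
  rwa [map_pow] at this

lemma hcm : a7 * (c7 * b7 * c7⁻¹) * a7⁻¹ * (c7 * b7 * c7⁻¹)⁻¹ = 1 := by
  have := rel_one
    (w := ⁅(FreeGroup.of 0 : FreeGroup (Fin 3)),
      FreeGroup.of 2 * FreeGroup.of 1 * (FreeGroup.of 2)⁻¹⁆)
    (by simp [rels7])
  rwa [commutatorElement_def, map_mul, map_mul, map_mul, map_mul, map_inv, map_inv,
    map_inv, map_mul, map_mul] at this

end HG7aux

open HG7aux in
theorem Hhat7_not_verballyClosed :
    lhs7 a7 b7 c7 = (a7 * b7) ^ 2 ∧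
    ¬ ∃ x y z : Ghat7, x ∈ Hhat7 ∧ y ∈ Hhat7 ∧ z ∈ Hhat7 ∧
        lhs7 x y z = (a7 * b7) ^ 2 := by
  constructor
  · unfold lhs7
    rw [hcm, show a7 ^ 3 = a7 from by rw [pow_succ, ha2, one_mul],
      show b7 ^ 3 = b7 from by rw [pow_succ, hb2, one_mul]]
    simp
  · rintro ⟨x, y, z, hx, hy, hz, heq⟩
    obtain ⟨u, hu⟩ := mem_range hx
    obtain ⟨v, hv⟩ := mem_range hy
    obtain ⟨w, hw⟩ := mem_range hz
    apply key u v w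
    apply ι_inj
    rw [map_shp, hu, hv, hw, ← map_shp, ← lhs7_eq_shp, heq, map_pow, map_mul, ψa, ψb,
      map_pow, map_mul, ι_sr0, ι_sr1]
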